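/- arXiv:1403.7007 — 5 statements merged into one kernel-verified Lean document; each statement's English description precedes it below -/
import Mathlib

section
/- Let N, M1, M2, K1, K2 be positive reals with K1, K2 ≥ 4, N ≥ K1·K2, M1 + M2·K2 ≥ N, 0 ≤ M1 < N/2K1, and 3N/(4K2) ≤ M2 < N/4. Then with s2 = ⌊N/(2M2)⌋, the quantity s2·(N - M1 - s2·M2)/(N + s2) is at least (1/13)·min{K1·K2, N/M2}. -/
theorem stmt_7 (N M1 M2 K1 K2 : ℝ)
    (hN : 0 < N) (hM1 : 0 < M1) (hM2 : 0 < M2) (hK1 : 4 ≤ K1) (hK2 : 4 ≤ K2)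
    (hNK : N ≥ K1 * K2) (hsum : M1 + M2 * K2 ≥ N)
    (hM1u : M1 < N / (2 * K1)) (hM2l : 3 * N / (4 * K2) ≤ M2) (hM2u : M2 < N / 4) :
    (⌊N / (2 * M2)⌋ : ℝ) * (N - M1 - (⌊N / (2 * M2)⌋ : ℝ) * M2) / (N + (⌊N / (2 * M2)⌋ : ℝ))
      ≥ (1 / 13) * min (K1 * K2) (N / M2) := by
  set x : ℝ := N / (2 * M2) with hx
  set s : ℝ := (⌊x⌋ : ℝ) with hs
  have hK1p : (0:ℝ) < K1 := by linarith
  have hK2p : (0:ℝ) < K2 := by linarith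
  have hx2 : (2:ℝ) < x := by
    rw [hx, lt_div_iff₀ (by linarith : (0:ℝ) < 2 * M2)]; linarith
  have hsle : s ≤ x := Int.floor_le x
  have hsx : x < s + 1 := Int.lt_floor_add_one x
  have hs2 : (2:ℝ) ≤ s := by
    have : (2:ℤ) ≤ ⌊x⌋ := Int.le_floor.mpr (by exact_mod_cast hx2.le)
    rw [hs]; exact_mod_cast this
  -- x * M2 = N / 2
  have hxM2 : x * M2 = N / 2 := by
    rw [hx]; field_simp
  have hsM2 : s * M2 ≤ N / 2 := by
    calc s * M2 ≤ x * M2 := by nlinarith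
    _ = N / 2 := hxM2
  -- M1 ≤ N/8
  have hM1b : M1 ≤ N / 8 := by
    have : N / (2 * K1) ≤ N / 8 := by
      apply div_le_div_of_nonneg_left hN.le (by norm_num) (by linarith)
    linarith
  have hnum : N - M1 - s * M2 ≥ 3 * N / 8 := by linarith
  -- s ≤ N/6
  have hK2N : K2 ≤ N / 4 := by
    have : 4 * K2 ≤ K1 * K2 := by nlinarith
    linarith
  have hxb : x ≤ 2 * K2 / 3 := by
    rw [hx, div_le_div_iff₀ (by linarith : (0:ℝ) < 2 * M2) (by norm_num : (0:ℝ) < 3)]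
    have : 3 * N / (4 * K2) ≤ M2 := hM2l
    rw [div_le_iff₀ (by linarith : (0:ℝ) < 4 * K2)] at this
    nlinarith
  have hsN : s ≤ N / 6 := by nlinarith
  -- min ≤ N/M2 = 2x ≤ 3s
  have hmin : min (K1 * K2) (N / M2) ≤ 3 * s := by
    have h1 : N / M2 = 2 * x := by rw [hx]; ring
    have : N / M2 ≤ 3 * s := by rw [h1]; nlinarith
    exact le_trans (min_le_right _ _) this
  have hden : (0:ℝ) < N + s := by linarith
  rw [ge_iff_le]
  calc (1/13) * min (K1 * K2) (N / M2) ≤ (3/13) * s := by nlinarith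
    _ ≤ s * (N - M1 - s * M2) / (N + s) := by
        rw [le_div_iff₀ hden]; nlinarith
end

section
/- Let N, M1, M2, K1, K2 be positive reals with K1, K2 ≥ 4, N ≥ K1·K2, N/(2K1) ≤ M1 < N/4, 3N/(4K2) ≤ M2 < N/4, and M1 ≥ M2. Then with s1 = ⌊N/(4M1)⌋ and s2 = ⌊M1/M2⌋, we have 1 ≤ s1 ≤ K1/2, 1 ≤ s2 ≤ K2/3, s1·s2 ≥ N/(16·M2), and s1·s2·(N - s1·M1 - s1·s2·M2)/(N + s1·s2) ≥ N/(35·M2). -/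
set_option maxHeartbeats 1600000 in
theorem stmt_8 (N M1 M2 K1 K2 : ℝ)
    (hN : 0 < N) (hM1 : 0 < M1) (hM2 : 0 < M2) (hK1 : 4 ≤ K1) (hK2 : 4 ≤ K2)
    (hNK : N ≥ K1 * K2)
    (hM1l : N / (2 * K1) ≤ M1) (hM1u : M1 < N / 4)
    (hM2l : 3 * N / (4 * K2) ≤ M2) (hM2u : M2 < N / 4)
    (hM12 : M1 ≥ M2) :
    1 ≤ (⌊N / (4 * M1)⌋ : ℝ) ∧ (⌊N / (4 * M1)⌋ : ℝ) ≤ K1 / 2 ∧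
    1 ≤ (⌊M1 / M2⌋ : ℝ) ∧ (⌊M1 / M2⌋ : ℝ) ≤ K2 / 3 ∧
    (⌊N / (4 * M1)⌋ : ℝ) * (⌊M1 / M2⌋ : ℝ) ≥ N / (16 * M2) ∧
    (⌊N / (4 * M1)⌋ : ℝ) * (⌊M1 / M2⌋ : ℝ) *
        (N - (⌊N / (4 * M1)⌋ : ℝ) * M1 - (⌊N / (4 * M1)⌋ : ℝ) * (⌊M1 / M2⌋ : ℝ) * M2) /
        (N + (⌊N / (4 * M1)⌋ : ℝ) * (⌊M1 / M2⌋ : ℝ))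
      ≥ N / (35 * M2) := by
  have hK1p : (0:ℝ) < K1 := by linarith
  have hK2p : (0:ℝ) < K2 := by linarith
  -- basic derived facts
  have hNM1 : N ≤ 2 * K1 * M1 := by
    rw [div_le_iff₀ (by positivity)] at hM1l; linarith
  have hNM2 : 3 * N ≤ 4 * K2 * M2 := by
    rw [div_le_iff₀ (by positivity)] at hM2l; linarith
  have hK2N : 4 * K2 ≤ N := by nlinarith
  have hM23 : (3:ℝ) ≤ M2 := by
    nlinarith
  set x1 : ℝ := N / (4 * M1) with hx1def
  set x2 : ℝ := M1 / M2 with hx2def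
  have hx1 : (1:ℝ) ≤ x1 := by
    rw [hx1def, le_div_iff₀ (by positivity)]; linarith
  have hx2 : (1:ℝ) ≤ x2 := by
    rw [hx2def, le_div_iff₀ hM2]; linarith
  have hS1l : (1:ℝ) ≤ (⌊x1⌋ : ℝ) := by
    have : (1:ℤ) ≤ ⌊x1⌋ := Int.le_floor.mpr (by push_cast; exact hx1)
    exact_mod_cast this
  have hS2l : (1:ℝ) ≤ (⌊x2⌋ : ℝ) := by
    have : (1:ℤ) ≤ ⌊x2⌋ := Int.le_floor.mpr (by push_cast; exact hx2)
    exact_mod_cast this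
  have hS1u : (⌊x1⌋ : ℝ) ≤ x1 := Int.floor_le _
  have hS2u : (⌊x2⌋ : ℝ) ≤ x2 := Int.floor_le _
  have hS1h : x1 / 2 ≤ (⌊x1⌋ : ℝ) := by
    have := Int.sub_one_lt_floor x1; linarith
  have hS2h : x2 / 2 ≤ (⌊x2⌋ : ℝ) := by
    have := Int.sub_one_lt_floor x2; linarith
  have hx1K : x1 ≤ K1 / 2 := by
    rw [hx1def, div_le_div_iff₀ (by positivity) (by norm_num)]; nlinarith
  have hx2K : x2 ≤ K2 / 3 := by
    rw [hx2def, div_le_div_iff₀ hM2 (by norm_num)]; nlinarith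
  set S1 : ℝ := (⌊x1⌋ : ℝ)
  set S2 : ℝ := (⌊x2⌋ : ℝ)
  have hx12 : x1 * x2 = N / (4 * M2) := by
    rw [hx1def, hx2def]; field_simp
  have hprod_u : S1 * S2 ≤ N / (4 * M2) := by
    rw [← hx12]
    exact mul_le_mul hS1u hS2u (by linarith) (by linarith)
  have hprod_l : N / (16 * M2) ≤ S1 * S2 := by
    have h : x1 / 2 * (x2 / 2) ≤ S1 * S2 :=
      mul_le_mul hS1h hS2h (by linarith) (by linarith)
    have : x1 / 2 * (x2 / 2) = N / (16 * M2) := by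
      rw [hx1def, hx2def]; field_simp; ring
    linarith
  have ht12 : S1 * S2 ≤ N / 12 := by
    have : N / (4 * M2) ≤ N / 12 := by
      apply div_le_div_of_nonneg_left (by linarith) (by norm_num) (by linarith)
    linarith
  -- numerator bound
  have hnum1 : S1 * M1 ≤ N / 4 := by
    have h := mul_le_mul_of_nonneg_right hS1u hM1.le
    have hx1M : x1 * M1 = N / 4 := by rw [hx1def]; field_simp
    linarith
  have hnum2 : S1 * S2 * M2 ≤ N / 4 := by
    have h1 : S2 * M2 ≤ M1 := by
      have h := mul_le_mul_of_nonneg_right hS2u hM2.le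
      have hx2M : x2 * M2 = M1 := by
        rw [hx2def]; exact div_mul_cancel₀ _ (ne_of_gt hM2)
      linarith
    have h2 : S1 * (S2 * M2) ≤ S1 * M1 :=
      mul_le_mul_of_nonneg_left h1 (by linarith)
    calc S1 * S2 * M2 = S1 * (S2 * M2) := by ring
      _ ≤ S1 * M1 := h2
      _ ≤ N / 4 := hnum1
  refine ⟨hS1l, le_trans hS1u hx1K, hS2l, le_trans hS2u hx2K, hprod_l, ?_⟩
  have htpos : (0:ℝ) < S1 * S2 := by nlinarith
  rw [ge_iff_le, div_le_div_iff₀ (by positivity) (by linarith)]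
  -- N * (N + S1*S2) ≤ S1*S2*(N - S1*M1 - S1*S2*M2) * (35*M2)
  have hnum : N / 2 ≤ N - S1 * M1 - S1 * S2 * M2 := by linarith
  have htM2 : N / 16 ≤ S1 * S2 * M2 := by
    rw [div_le_iff₀ (by positivity)] at hprod_l
    nlinarith
  have h1 : N * (N + S1 * S2) ≤ 13 / 12 * N ^ 2 := by nlinarith
  have h2 : 35 * N ^ 2 / 32 ≤ S1 * S2 * (N / 2) * (35 * M2) := by nlinarith
  have h3 : S1 * S2 * (N / 2) * (35 * M2) ≤
      S1 * S2 * (N - S1 * M1 - S1 * S2 * M2) * (35 * M2) := by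
    have := mul_le_mul_of_nonneg_left hnum htpos.le
    nlinarith
  nlinarith
end

section
/- Let N, M1, M2, K1, K2 be positive reals with K1, K2 ≥ 4 (K1, K2 integers), N ≥ K1·K2, 0 ≤ M1 < N/K1, and 0 ≤ M2 < N/(K1·K2). Then with s1 = ⌊K1/3⌋ and s2 = K2, we have s1·s2·(N - s1·M1 - s1·s2·M2)/(N + s1·s2) ≥ K1·K2/24. -/
set_option maxHeartbeats 1000000


theorem stmt_10 (N M1 M2 : ℝ) (K1 K2 : ℕ)
    (hN : 0 < N) (hK1 : 4 ≤ K1) (hK2 : 4 ≤ K2) (hNK : N ≥ (K1 : ℝ) * K2)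
    (hM1l : 0 ≤ M1) (hM1u : M1 < N / K1)
    (hM2l : 0 ≤ M2) (hM2u : M2 < N / ((K1 : ℝ) * K2)) :
    ((K1 / 3 : ℕ) : ℝ) * K2 *
        (N - ((K1 / 3 : ℕ) : ℝ) * M1 - ((K1 / 3 : ℕ) : ℝ) * K2 * M2) /
        (N + ((K1 / 3 : ℕ) : ℝ) * K2)
      ≥ (K1 : ℝ) * K2 / 24 := by
  set a : ℝ := ((K1 / 3 : ℕ) : ℝ) with ha
  have hK1r : (4:ℝ) ≤ (K1:ℝ) := by exact_mod_cast hK1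
  have hK2r : (4:ℝ) ≤ (K2:ℝ) := by exact_mod_cast hK2
  have ha1 : (1:ℝ) ≤ a := by
    have : (1:ℕ) ≤ K1 / 3 := by omega
    rw [ha]; exact_mod_cast this
  have h3a : 3 * a ≤ (K1:ℝ) := by
    have : 3 * (K1 / 3) ≤ K1 := by omega
    rw [ha]; exact_mod_cast this
  have h3a' : (K1:ℝ) ≤ 3 * a + 2 := by
    have : K1 ≤ 3 * (K1 / 3) + 2 := by omega
    rw [ha]; exact_mod_cast this
  have hK1pos : (0:ℝ) < (K1:ℝ) := by linarith
  have hK1K2pos : (0:ℝ) < (K1:ℝ) * K2 := by nlinarith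
  have hM1' : (K1:ℝ) * M1 ≤ N := by
    have := hM1u.le
    rw [le_div_iff₀ hK1pos] at this
    linarith
  have hM2' : (K1:ℝ) * K2 * M2 ≤ N := by
    have := hM2u.le
    rw [le_div_iff₀ hK1K2pos] at this
    linarith
  have hden : (0:ℝ) < N + a * K2 := by nlinarith
  -- numerator lower bound: a*M1 ≤ N/3 and a*K2*M2 ≤ N/3
  have hnum1 : 3 * (a * M1) ≤ N := by nlinarith [mul_nonneg (sub_nonneg.mpr h3a) hM1l]
  have hnum2 : 3 * (a * (K2:ℝ) * M2) ≤ N := by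
    nlinarith [mul_nonneg (mul_nonneg (sub_nonneg.mpr h3a) (by linarith : (0:ℝ) ≤ (K2:ℝ))) hM2l]
  have hnum : N / 3 ≤ N - a * M1 - a * K2 * M2 := by linarith
  have hab : 3 * (a * K2) ≤ N := by nlinarith
  have hK5 : (K1:ℝ) ≤ 5 * a := by linarith
  rw [ge_iff_le, div_le_div_iff₀ (by norm_num) hden]
  nlinarith [mul_nonneg (mul_nonneg (by linarith : (0:ℝ) ≤ 5 * a - (K1:ℝ)) (by linarith : (0:ℝ) ≤ (K2:ℝ))) hden.le,
    mul_le_mul_of_nonneg_left hnum (by nlinarith : (0:ℝ) ≤ a * K2),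
    mul_nonneg (by nlinarith : (0:ℝ) ≤ a * K2) hN.le]
end

section
/- Let N, M1, M2, K1, K2 be positive reals with K1, K2 ≥ 4 (integers), N ≥ K1·K2, N/4 ≤ M1 ≤ N, and (N-M1)/K2 ≤ M2 < (N-M1)/2. Then with s2 = ⌊(N-M1)/(2·M2)⌋, we have 1 ≤ s2 ≤ K2/2, and s2·(N - M1 - s2·M2)/(N + s2) ≥ (N - M1)²/(9·M2·N). -/
theorem stmt_14 (N M1 M2 : ℝ) (K1 K2 : ℕ)
    (hN : 0 < N) (hM2 : 0 < M2) (hK1 : 4 ≤ K1) (hK2 : 4 ≤ K2)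
    (hNK : N ≥ (K1 : ℝ) * K2)
    (hM1l : N / 4 ≤ M1) (hM1u : M1 ≤ N)
    (hM2l : (N - M1) / K2 ≤ M2) (hM2u : M2 < (N - M1) / 2) :
    1 ≤ (⌊(N - M1) / (2 * M2)⌋ : ℝ) ∧ (⌊(N - M1) / (2 * M2)⌋ : ℝ) ≤ (K2 : ℝ) / 2 ∧
    (⌊(N - M1) / (2 * M2)⌋ : ℝ) * (N - M1 - (⌊(N - M1) / (2 * M2)⌋ : ℝ) * M2) /
        (N + (⌊(N - M1) / (2 * M2)⌋ : ℝ))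
      ≥ (N - M1) ^ 2 / (9 * M2 * N) := by
  set x : ℝ := (N - M1) / (2 * M2) with hxdef
  set s : ℝ := (⌊x⌋ : ℝ) with hsdef
  clear_value x s
  have hK2pos : (0 : ℝ) < K2 := by positivity
  have hK2' : (4 : ℝ) ≤ K2 := by exact_mod_cast hK2
  have hK1' : (4 : ℝ) ≤ K1 := by exact_mod_cast hK1
  have h2M2 : 0 < 2 * M2 := by linarith
  have hx1 : (1 : ℝ) ≤ x := by
    rw [hxdef, le_div_iff₀ h2M2]; linarith
  have hs1 : (1 : ℝ) ≤ s := by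
    have h : (1:ℤ) ≤ ⌊x⌋ := Int.le_floor.mpr (by exact_mod_cast hx1)
    rw [hsdef]; exact_mod_cast h
  have hsx : s ≤ x := hsdef ▸ Int.floor_le x
  have hxK : x ≤ (K2 : ℝ) / 2 := by
    rw [hxdef, div_le_div_iff₀ h2M2 (by norm_num : (0:ℝ) < 2)]
    have := (div_le_iff₀ hK2pos).mp hM2l
    nlinarith
  have hsK : s ≤ (K2 : ℝ) / 2 := le_trans hsx hxK
  refine ⟨hs1, hsK, ?_⟩
  -- s ≥ x/2
  have hsx2 : x / 2 ≤ s := by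
    have hlt : x < s + 1 := hsdef ▸ Int.lt_floor_add_one x
    linarith
  -- s*M2 ≤ (N-M1)/2
  have hsM2 : s * M2 ≤ (N - M1) / 2 := by
    have : x * M2 = (N - M1) / 2 := by
      rw [hxdef, div_mul_eq_mul_div, div_eq_div_iff h2M2.ne' two_ne_zero]; ring
    nlinarith
  -- K2 ≤ N/4 so s ≤ N/8
  have hK2N : (K2 : ℝ) ≤ N / 4 := by nlinarith
  have hsN : s ≤ N / 8 := by linarith
  have hNs : 0 < N + s := by linarith
  have hden : 0 < 9 * M2 * N := by positivity
  rw [ge_iff_le, div_le_div_iff₀ hden hNs]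
  -- key bounds
  have hNM : 0 < N - M1 := by linarith
  have hnum : (N - M1) ^ 2 / (8 * M2) ≤ s * (N - M1 - s * M2) := by
    have hA : N - M1 ≤ 4 * M2 * s := by
      have : x * (2 * M2) = N - M1 := by rw [hxdef, div_mul_cancel₀ _ h2M2.ne']
      nlinarith
    have hB : N - M1 ≤ 2 * (N - M1 - s * M2) := by linarith
    have hs0 : (0:ℝ) ≤ 4 * M2 * s := by nlinarith [mul_pos hM2 (show (0:ℝ) < s by linarith)]
    have key : (N - M1) * (N - M1) ≤ (4 * M2 * s) * (2 * (N - M1 - s * M2)) :=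
      mul_le_mul hA hB (by linarith) hs0
    rw [div_le_iff₀ (by positivity : (0:ℝ) < 8 * M2)]
    calc (N - M1) ^ 2 = (N - M1) * (N - M1) := sq (N - M1)
      _ ≤ 4 * M2 * s * (2 * (N - M1 - s * M2)) := key
      _ = s * (N - M1 - s * M2) * (8 * M2) := by ring
  have hP : 0 ≤ s * (N - M1 - s * M2) := mul_nonneg (by linarith) (by linarith)
  have hnum' : (N - M1) ^ 2 ≤ 8 * M2 * (s * (N - M1 - s * M2)) := by
    rw [div_le_iff₀ (by positivity : (0:ℝ) < 8 * M2)] at hnum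
    linarith
  calc (N - M1) ^ 2 * (N + s) ≤ (N - M1) ^ 2 * (9 * N / 8) := by
        apply mul_le_mul_of_nonneg_left (by linarith) (by positivity)
    _ ≤ 8 * M2 * (s * (N - M1 - s * M2)) * (9 * N / 8) := by
        apply mul_le_mul_of_nonneg_right hnum' (by positivity)
    _ = s * (N - M1 - s * M2) * (9 * M2 * N) := by ring
end

section
/- Let N, M1, M2, K1, K2 be positive reals with K1, K2 ≥ 4 (integers), N ≥ K1·K2, N/K1 ≤ M1 < N/4, and 0 ≤ M2 < N/(4·K2). Then with s1 = ⌊N/(2·(M1 + M2·K2))⌋ and s2 = K2, we have 1 ≤ s1 ≤ K1/2, and s1·K2·(N - s1·(M1 + M2·K2))/(N + s1·K2) ≥ N·K2/(12·(M1 + M2·K2)). -/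
set_option maxHeartbeats 1000000


theorem stmt_19 (N M1 M2 : ℝ) (K1 K2 : ℕ)
    (hN : 0 < N) (hK1 : 4 ≤ K1) (hK2 : 4 ≤ K2) (hNK : N ≥ (K1 : ℝ) * K2)
    (hM1l : N / K1 ≤ M1) (hM1u : M1 < N / 4)
    (hM2l : 0 ≤ M2) (hM2u : M2 < N / (4 * K2)) :
    1 ≤ (⌊N / (2 * (M1 + M2 * K2))⌋ : ℝ) ∧
    (⌊N / (2 * (M1 + M2 * K2))⌋ : ℝ) ≤ (K1 : ℝ) / 2 ∧
    (⌊N / (2 * (M1 + M2 * K2))⌋ : ℝ) * K2 *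
        (N - (⌊N / (2 * (M1 + M2 * K2))⌋ : ℝ) * (M1 + M2 * K2)) /
        (N + (⌊N / (2 * (M1 + M2 * K2))⌋ : ℝ) * K2)
      ≥ N * K2 / (12 * (M1 + M2 * K2)) := by
  have hK1R : (4 : ℝ) ≤ (K1 : ℝ) := by exact_mod_cast hK1
  have hK2R : (4 : ℝ) ≤ (K2 : ℝ) := by exact_mod_cast hK2
  have hK1pos : (0 : ℝ) < K1 := by linarith
  have hK2pos : (0 : ℝ) < K2 := by linarith
  have hM1pos : 0 < M1 := lt_of_lt_of_le (div_pos hN hK1pos) hM1l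
  have hD : 0 < M1 + M2 * K2 := by positivity
  set D := M1 + M2 * K2 with hDdef
  have hM2K2 : M2 * K2 < N / 4 := by
    calc M2 * K2 < N / (4 * K2) * K2 := mul_lt_mul_of_pos_right hM2u hK2pos
      _ = N / 4 := by field_simp
  have h2D : 2 * D < N := by rw [hDdef]; linarith
  set x := N / (2 * D) with hxdef
  have hx1 : 1 ≤ x := by
    rw [hxdef, le_div_iff₀ (by linarith)]; linarith
  have hfloor1 : (1 : ℝ) ≤ (⌊x⌋ : ℝ) := by
    exact_mod_cast Int.le_floor.mpr (by exact_mod_cast hx1)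
  have hfloorle : (⌊x⌋ : ℝ) ≤ x := Int.floor_le x
  have hxK1 : x ≤ (K1 : ℝ) / 2 := by
    rw [hxdef, div_le_div_iff₀ (by linarith) (by norm_num)]
    have hM1l' : N ≤ M1 * K1 := (div_le_iff₀ hK1pos).mp hM1l
    nlinarith [mul_nonneg (mul_nonneg hM2l hK2pos.le) hK1pos.le]
  refine ⟨hfloor1, le_trans hfloorle hxK1, ?_⟩
  set s : ℝ := (⌊x⌋ : ℝ) with hsdef
  have hsx2 : x / 2 ≤ s := by
    rcases le_or_gt x 2 with h | h
    · linarith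
    · have := Int.sub_one_lt_floor x
      linarith
  have hsD : s * D ≤ N / 2 := by
    have : s * D ≤ x * D := mul_le_mul_of_nonneg_right hfloorle hD.le
    have hxD : x * D = N / 2 := by rw [hxdef]; field_simp
    exact this.trans hxD.le
  have hsK2 : s * K2 ≤ N / 2 := by
    have h1 : s * K2 ≤ (K1 : ℝ) / 2 * K2 :=
      mul_le_mul_of_nonneg_right (le_trans hfloorle hxK1) hK2pos.le
    nlinarith
  have hden : N + s * K2 ≤ 3 * N / 2 := by linarith
  have hdenpos : 0 < N + s * K2 := by nlinarith
  have hnum : x / 2 * K2 * (N / 2) ≤ s * K2 * (N - s * D) := by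
    have h1 : N / 2 ≤ N - s * D := by linarith
    have h2 : x / 2 * K2 ≤ s * K2 := mul_le_mul_of_nonneg_right hsx2 hK2pos.le
    have h3 : 0 ≤ x / 2 * K2 := by positivity
    nlinarith
  have key : x / 2 * K2 * (N / 2) / (3 * N / 2) ≤ s * K2 * (N - s * D) / (N + s * K2) :=
    div_le_div₀ (le_trans (by positivity) hnum) hnum hdenpos hden
  have heq : x / 2 * K2 * (N / 2) / (3 * N / 2) = N * K2 / (12 * D) := by
    rw [hxdef]; field_simp; ring
  rw [ge_iff_le, ← heq]; exact key
end
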